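/- Let α ∉ {0, 1/3, 1/2}, β = 3 - 1/α, h_α(z) = ((3α-1)/α²)(z²-3αz+α)/(z²(z-β)). Then z_α = 6α - 2 is a critical point of h_α: h_α'(6α-2) = 0 (whenever 6α-2 ∉ {0, β}). -/

import Mathlib

/-- z_α = 6α - 2 is a critical point of
h_α(z) = ((3α-1)/α²)(z²-3αz+α)/(z²(z-β)), β = 3 - 1/α: h_α'(6α-2) = 0. -/
theorem stmt_17 (α β : ℂ)
    (h0 : α ≠ 0) (h13 : α ≠ 1/3) (h12 : α ≠ 1/2) (hβ : β = 3 - 1/α)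
    (hz0 : 6*α - 2 ≠ 0) (hzβ : 6*α - 2 ≠ β)
    (h : ℂ → ℂ)
    (hh : ∀ z : ℂ, h z = ((3*α - 1) / α^2) * (z^2 - 3*α*z + α) / (z^2 * (z - β))) :
    deriv h (6*α - 2) = 0 := by
  set c := (3*α - 1) / α^2 with hc
  set z0 := 6*α - 2 with hz
  have hden : z0^2 * (z0 - β) ≠ 0 :=
    mul_ne_zero (pow_ne_zero 2 hz0) (sub_ne_zero.mpr hzβ)
  have hN : HasDerivAt (fun z : ℂ => c * (z^2 - 3*α*z + α)) (c * (2*z0 - 3*α)) z0 := by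
    have h1 : HasDerivAt (fun z : ℂ => z^2 - 3*α*z + α) (2*z0 - 3*α) z0 := by
      have := (((hasDerivAt_pow 2 z0).sub ((hasDerivAt_id z0).const_mul (3*α))).add_const α)
      simpa [mul_comm] using this
    exact h1.const_mul c
  have hD : HasDerivAt (fun z : ℂ => z^2 * (z - β)) (2*z0*(z0 - β) + z0^2) z0 := by
    have := (hasDerivAt_pow 2 z0).mul ((hasDerivAt_id z0).sub_const β)
    exact this.congr_deriv (by norm_num)
  have hH : HasDerivAt (fun z : ℂ => c * (z^2 - 3*α*z + α) / (z^2 * (z - β)))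
      ((c * (2*z0 - 3*α) * (z0^2 * (z0 - β)) -
        c * (z0^2 - 3*α*z0 + α) * (2*z0*(z0 - β) + z0^2)) / (z0^2 * (z0 - β))^2) z0 :=
    hN.div hD hden
  have hfun : h = fun z : ℂ => c * (z^2 - 3*α*z + α) / (z^2 * (z - β)) := funext hh
  rw [hfun, hH.deriv, div_eq_zero_iff]
  left
  subst hβ
  simp only [hz, hc]
  field_simp
  ring
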